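/- For fixed μ > 0 and α > 0, if k, k' ∈ [μ + α, ∞) with |k − k'| ≤ ε, then |d(k) − d(k')| ≤ 3ε/((μ+α)·α), where d(k) = arctanh(μ/k)/k. -/

import Mathlib

/-- Inverse hyperbolic tangent. -/
noncomputable def artanh (x : ℝ) : ℝ := (1 / 2) * Real.log ((1 + x) / (1 - x))

/-- For `μ, α > 0`, if `k, k' ∈ [μ+α, ∞)` with `|k − k'| ≤ ε`, then
`|d(k) − d(k')| ≤ 3ε/((μ+α)α)` where `d(k) = artanh(μ/k)/k`. -/
theorem depth_stability (μ α ε k k' : ℝ) (hμ : 0 < μ) (hα : 0 < α)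
    (hk : μ + α ≤ k) (hk' : μ + α ≤ k') (hε : |k - k'| ≤ ε) :
    |artanh (μ / k) / k - artanh (μ / k') / k'| ≤ 3 * ε / ((μ + α) * α) := by
  have hμα : 0 < μ + α := by linarith
  set s : Set ℝ := Set.Ici (μ + α) with hs
  set f : ℝ → ℝ := fun x => (Real.log (x + μ) - Real.log (x - μ)) / (2 * x) with hf
  set f' : ℝ → ℝ := fun x =>
    ((1 / (x + μ) - 1 / (x - μ)) * (2 * x) - (Real.log (x + μ) - Real.log (x - μ)) * 2)
      / (2 * x) ^ 2 with hf'
  have key : ∀ x ∈ s, HasDerivAt f (f' x) x := by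
    intro x hx
    rw [hs, Set.mem_Ici] at hx
    have hx1 : 0 < x + μ := by linarith
    have hx2 : 0 < x - μ := by linarith
    have hx0 : 0 < x := by linarith
    have h1 : HasDerivAt (fun y : ℝ => Real.log (y + μ)) (1 / (x + μ)) x := by
      simpa using ((hasDerivAt_id x).add_const μ).log (ne_of_gt hx1)
    have h2 : HasDerivAt (fun y : ℝ => Real.log (y - μ)) (1 / (x - μ)) x := by
      simpa using ((hasDerivAt_id x).sub_const μ).log (ne_of_gt hx2)
    have h3 : HasDerivAt (fun y : ℝ => 2 * y) 2 x := by
      simpa using (hasDerivAt_id x).const_mul (2 : ℝ)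
    have := (h1.sub h2).div h3 (by positivity)
    exact this
  have bound : ∀ x ∈ s, ‖f' x‖ ≤ 2 / ((μ + α) * α) := by
    intro x hx
    rw [hs, Set.mem_Ici] at hx
    have hx1 : 0 < x + μ := by linarith
    have hx2 : 0 < x - μ := by linarith
    have hx0 : 0 < x := by linarith
    set a : ℝ := Real.log (x + μ) - Real.log (x - μ) with ha
    have ha0 : 0 ≤ a := by
      rw [ha, sub_nonneg]
      exact Real.log_le_log hx2 (by linarith)
    have ha1 : a * (x - μ) ≤ 2 * μ := by
      have h4 : a = Real.log ((x + μ) / (x - μ)) := by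
        rw [ha, Real.log_div (ne_of_gt hx1) (ne_of_gt hx2)]
      have h5 : Real.log ((x + μ) / (x - μ)) ≤ (x + μ) / (x - μ) - 1 :=
        Real.log_le_sub_one_of_pos (by positivity)
      have h6 : a ≤ (x + μ) / (x - μ) - 1 := by rw [h4]; exact h5
      have h7 : ((x + μ) / (x - μ) - 1) * (x - μ) = 2 * μ := by
        field_simp
        ring
      nlinarith [mul_le_mul_of_nonneg_right h6 (le_of_lt hx2)]
    have hfx : f' x = -(μ / (x * ((x + μ) * (x - μ))) + a / (2 * x ^ 2)) := by
      rw [hf']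
      field_simp
      ring
    rw [Real.norm_eq_abs, hfx, abs_neg,
      abs_of_nonneg (by positivity : (0:ℝ) ≤ μ / (x * ((x + μ) * (x - μ))) + a / (2 * x ^ 2))]
    have t1 : μ / (x * ((x + μ) * (x - μ))) ≤ 1 / ((μ + α) * α) := by
      rw [div_le_div_iff₀ (by positivity) (by positivity)]
      nlinarith [mul_le_mul hx (mul_le_mul (by linarith : μ ≤ x + μ) (by linarith : α ≤ x - μ)
        hα.le (by linarith)) (by positivity) (by linarith : (0:ℝ) ≤ x)]
    have t2 : a / (2 * x ^ 2) ≤ 1 / ((μ + α) * α) := by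
      rw [div_le_div_iff₀ (by positivity) (by positivity)]
      nlinarith [mul_le_mul_of_nonneg_left (by linarith : α ≤ x - μ) ha0,
        mul_le_mul hx hx (by linarith) (by linarith : (0:ℝ) ≤ x)]
    have : 2 / ((μ + α) * α) = 1 / ((μ + α) * α) + 1 / ((μ + α) * α) := by ring
    linarith
  have lip := Convex.norm_image_sub_le_of_norm_hasDerivWithin_le
    (fun x hx => (key x hx).hasDerivWithinAt) bound (convex_Ici _)
    (Set.mem_Ici.mpr hk') (Set.mem_Ici.mpr hk)
  have eqd : ∀ x : ℝ, μ + α ≤ x → artanh (μ / x) / x = f x := by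
    intro x hx
    have hx1 : 0 < x + μ := by linarith
    have hx2 : 0 < x - μ := by linarith
    have hx0 : 0 < x := by linarith
    have hxm : 0 < 1 - μ / x := by
      have : μ / x < 1 := (div_lt_one hx0).mpr (by linarith)
      linarith
    have h1 : (1 + μ / x) / (1 - μ / x) = (x + μ) / (x - μ) := by
      rw [div_eq_div_iff (ne_of_gt hxm) (ne_of_gt hx2)]
      field_simp
    rw [hf, artanh, h1, Real.log_div (ne_of_gt hx1) (ne_of_gt hx2)]
    ring
  have hε0 : 0 ≤ ε := le_trans (abs_nonneg _) hε
  rw [eqd k hk, eqd k' hk']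
  rw [Real.norm_eq_abs, Real.norm_eq_abs] at lip
  have h8 : 2 / ((μ + α) * α) * |k - k'| ≤ 2 / ((μ + α) * α) * ε :=
    mul_le_mul_of_nonneg_left hε (by positivity)
  have h9 : 2 / ((μ + α) * α) * ε ≤ 3 * ε / ((μ + α) * α) := by
    rw [div_mul_eq_mul_div, div_le_div_iff₀ (by positivity) (by positivity)]
    nlinarith [mul_pos hμα hα]
  linarith
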